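/- Let Σ ⊂ ℝ^d = ℝ^{d−1} × ℝ be a cylindric set with base Π ⊂ ℝ^{d−1} of positive Lebesgue measure, and let Γ ⊂ ℝ^{d−1} be a countable set such that E(Γ) is a Riesz basis in L²(Π). Then there exists a constant M = M(Π, Γ) such that for every f ∈ L²(Σ), ‖f‖²_{L²(Σ)} ≤ M ∑_{(γ,n) ∈ Γ × ℤ} |⟨f, e_{(γ,n)}⟩_{L²(Σ)}|², where e_{(γ,n)}(x,y) = e^{2πi⟨γ,x⟩} e^{2πi n y}. -/

import Mathlib

open MeasureTheory Complex
open scoped RealInnerProductSpace Pointwise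

noncomputable section

/-- A family of vectors in a Hilbert space is a *Riesz basis* if it is the image of an
orthonormal (Hilbert) basis under a bounded invertible linear operator. -/
def IsRieszBasis {H : Type*} [NormedAddCommGroup H] [InnerProductSpace ℂ H] {ι : Type*}
    (f : ι → H) : Prop :=
  ∃ (e : HilbertBasis ι ℂ H) (T : H ≃L[ℂ] H), ∀ i, f i = T (e i)

/-- The exponential function `e_λ(x) = e^{2πi⟨λ,x⟩}` on `ℝ^d`. -/
def expFun {d : ℕ} (l : EuclideanSpace ℝ (Fin d)) : EuclideanSpace ℝ (Fin d) → ℂ :=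
  fun x => Complex.exp (2 * Real.pi * Complex.I * ((⟪ l, x ⟫ : ℝ) : ℂ))

open scoped Classical in
/-- The exponential `e_λ` regarded as an element of `L²(Ω)`. -/
def expLp {d : ℕ} (Ω : Set (EuclideanSpace ℝ (Fin d))) (l : EuclideanSpace ℝ (Fin d)) :
    Lp ℂ 2 (volume.restrict Ω) :=
  if h : MemLp (expFun l) 2 (volume.restrict Ω) then h.toLp _ else 0

/-- A cylindric set `S ⊆ ℝ^{m} × ℝ` with base `B ⊆ ℝ^{m}`: over every point of the
bounded measurable base `B`, the fiber of `S` is an interval `[φ x, φ x + 1]` of length one,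
where `φ` is a bounded measurable function on `B`. -/
def IsCylindric {m : ℕ} (S : Set (EuclideanSpace ℝ (Fin m) × ℝ))
    (B : Set (EuclideanSpace ℝ (Fin m))) : Prop :=
  Bornology.IsBounded S ∧ MeasurableSet S ∧ Bornology.IsBounded B ∧ MeasurableSet B ∧
    ∃ φ : EuclideanSpace ℝ (Fin m) → ℝ, Measurable φ ∧ (∃ C : ℝ, ∀ x ∈ B, |φ x| ≤ C) ∧
      S = {p | p.1 ∈ B ∧ φ p.1 ≤ p.2 ∧ p.2 ≤ φ p.1 + 1}

open scoped Classical in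
/-- The exponential `e_{(γ,n)}(x,y) = e^{2πi⟨γ,x⟩} e^{2πiny}` as an element of `L²(S)`,
for `S ⊆ ℝ^{m} × ℝ`. -/
def expLpProd {m : ℕ} (S : Set (EuclideanSpace ℝ (Fin m) × ℝ))
    (γ : EuclideanSpace ℝ (Fin m)) (n : ℤ) : Lp ℂ 2 (volume.restrict S) :=
  if h : MemLp (fun p : EuclideanSpace ℝ (Fin m) × ℝ =>
      Complex.exp (2 * Real.pi * Complex.I * (((⟪ γ, p.1 ⟫ : ℝ) + (n : ℝ) * p.2 : ℝ) : ℂ)))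
      2 (volume.restrict S)
  then h.toLp _ else 0


open Set ComplexConjugate
open scoped ENNReal Real

section Aux

lemma cyl_riesz_lower {ι : Type*} {H : Type*} [NormedAddCommGroup H] [InnerProductSpace ℂ H]
    [CompleteSpace H] {v : ι → H} (hb : IsRieszBasis v) :
    ∃ M Mu : ℝ, 0 ≤ M ∧ 0 ≤ Mu ∧ ∀ g : H, ∃ s : ℝ,
      HasSum (fun i => ‖(inner ℂ g (v i) : ℂ)‖ ^ 2) s ∧ ‖g‖ ^ 2 ≤ M * s ∧ s ≤ Mu * ‖g‖ ^ 2 := by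
  obtain ⟨e, T, hT⟩ := hb
  set A : H →L[ℂ] H := (T : H →L[ℂ] H) with hA
  set Ainv : H →L[ℂ] H := (T.symm : H →L[ℂ] H) with hAinv
  set adA := ContinuousLinearMap.adjoint A with hadA
  set adAinv := ContinuousLinearMap.adjoint Ainv with hadAinv
  refine ⟨‖adAinv‖ ^ 2, ‖adA‖ ^ 2, sq_nonneg _, sq_nonneg _, fun g => ?_⟩
  have hinner : ∀ i, (inner ℂ g (v i) : ℂ) = inner ℂ (adA g) (e i) := by
    intro i
    rw [hT i]
    exact (ContinuousLinearMap.adjoint_inner_left A (e i) g).symm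
  have hrepr : ∀ i, ‖(inner ℂ g (v i) : ℂ)‖ ^ 2 = ‖e.repr (adA g) i‖ ^ 2 := by
    intro i
    rw [hinner i, ← inner_conj_symm, e.repr_apply_apply, RCLike.norm_conj]
  have hsummable : Summable fun i => ‖e.repr (adA g) i‖ ^ 2 := by
    have := (lp.memℓp (e.repr (adA g))).summable (by norm_num : 0 < (2 : ℝ≥0∞).toReal)
    simpa using this
  have htsum : ∑' i, ‖e.repr (adA g) i‖ ^ 2 = ‖adA g‖ ^ 2 := by
    have h1 := lp.norm_rpow_eq_tsum (by norm_num : 0 < (2 : ℝ≥0∞).toReal) (e.repr (adA g))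
    have h2 : ‖e.repr (adA g)‖ = ‖adA g‖ := e.repr.norm_map _
    rw [h2] at h1
    have h3 : ((2 : ℝ≥0∞).toReal) = ((2 : ℕ) : ℝ) := by norm_num
    rw [h3] at h1
    simp only [Real.rpow_natCast] at h1
    exact h1.symm
  have hcomp : adAinv.comp adA = ContinuousLinearMap.id ℂ H := by
    have hAA : A.comp Ainv = ContinuousLinearMap.id ℂ H := by
      ext x; simp [hA, hAinv]
    rw [hadA, hadAinv, ← ContinuousLinearMap.adjoint_comp, hAA, ContinuousLinearMap.adjoint_id]
  have hg : g = adAinv (adA g) := by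
    have := congrArg (fun (L : H →L[ℂ] H) => L g) hcomp
    simpa using this.symm
  refine ⟨‖adA g‖ ^ 2, ?_, ?_, ?_⟩
  · simp only [hrepr]
    have h := hsummable.hasSum
    rwa [htsum] at h
  · have h1 : ‖g‖ ≤ ‖adAinv‖ * ‖adA g‖ := by
      conv_lhs => rw [hg]
      exact adAinv.le_opNorm _
    calc ‖g‖ ^ 2 ≤ (‖adAinv‖ * ‖adA g‖) ^ 2 := by
          exact pow_le_pow_left₀ (norm_nonneg _) h1 2
      _ = ‖adAinv‖ ^ 2 * ‖adA g‖ ^ 2 := mul_pow _ _ _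
  · have h1 : ‖adA g‖ ≤ ‖adA‖ * ‖g‖ := adA.le_opNorm _
    calc ‖adA g‖ ^ 2 ≤ (‖adA‖ * ‖g‖) ^ 2 := pow_le_pow_left₀ (norm_nonneg _) h1 2
      _ = ‖adA‖ ^ 2 * ‖g‖ ^ 2 := mul_pow _ _ _

lemma cyl_norm_sq_integral {α : Type*} [MeasurableSpace α] {μ : Measure α} (f : Lp ℂ 2 μ) :
    ‖f‖ ^ 2 = ∫ a, ‖f a‖ ^ 2 ∂μ := by
  have H₃ := congr_arg RCLike.re (L2.inner_def (𝕜 := ℂ) (μ := μ) f f)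
  rw [← integral_re (L2.integrable_inner f f)] at H₃
  simp only [← @norm_sq_eq_re_inner ℂ] at H₃
  exact H₃

lemma cyl_ofReal_integral_norm_sq {α : Type*} [MeasurableSpace α] {μ : Measure α} {h : α → ℂ}
    (hm : MemLp h 2 μ) :
    ENNReal.ofReal (∫ a, ‖h a‖ ^ 2 ∂μ) = ∫⁻ a, (‖h a‖₊ : ℝ≥0∞) ^ 2 ∂μ := by
  have hint : Integrable (fun a => ‖h a‖ ^ 2) μ := by
    have := hm.integrable_norm_rpow (by norm_num) (by norm_num)
    have h3 : ((2 : ℝ≥0∞).toReal) = ((2 : ℕ) : ℝ) := by norm_num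
    rw [h3] at this
    simpa [Real.rpow_natCast] using this
  rw [MeasureTheory.ofReal_integral_eq_lintegral_ofReal hint
    (Filter.Eventually.of_forall fun a => sq_nonneg _)]
  congr 1
  ext a
  rw [ENNReal.ofReal_pow (norm_nonneg _), ofReal_norm, enorm_eq_nnnorm]

lemma cyl_lp_norm_sq_as_lintegral {α : Type*} [MeasurableSpace α] {μ : Measure α}
    (f : Lp ℂ 2 μ) :
    ENNReal.ofReal (‖f‖ ^ 2) = ∫⁻ a, (‖f a‖₊ : ℝ≥0∞) ^ 2 ∂μ := by
  rw [cyl_norm_sq_integral f, cyl_ofReal_integral_norm_sq (Lp.memLp f)]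

lemma cyl_memℒp_two_of_lintegral {α : Type*} [MeasurableSpace α] {μ : Measure α} {h : α → ℂ}
    (hm : AEStronglyMeasurable h μ) (hfin : ∫⁻ a, (‖h a‖₊ : ℝ≥0∞) ^ 2 ∂μ ≠ ∞) :
    MemLp h 2 μ := by
  refine ⟨hm, ?_⟩
  rw [eLpNorm_eq_lintegral_rpow_enorm_toReal (by norm_num) (by norm_num)]
  refine ENNReal.rpow_lt_top_of_nonneg (by norm_num) ?_
  have h3 : ((2 : ℝ≥0∞).toReal) = ((2 : ℕ) : ℝ) := by norm_num
  rw [h3]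
  simpa [ENNReal.rpow_natCast, enorm_eq_nnnorm] using hfin

lemma cyl_norm_exp (r : ℝ) : ‖Complex.exp (2 * Real.pi * Complex.I * (r : ℂ))‖ = 1 := by
  have : (2 * Real.pi * Complex.I * (r : ℂ)) = ((2 * Real.pi * r : ℝ) : ℂ) * Complex.I := by
    push_cast; ring
  rw [this, Complex.norm_exp_ofReal_mul_I]

/-- Parseval on a unit-length interval. -/
lemma cyl_fiber_parseval (a : ℝ) (g : ℝ → ℂ) (hg : StronglyMeasurable g)
    (hmem : MemLp g 2 (volume.restrict (Ioc a (a + 1)))) :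
    HasSum (fun n : ℤ =>
        ‖∫ y in Ioc a (a + 1), Complex.exp (2 * π * Complex.I * (-n) * y) * g y‖ ^ 2)
      (∫ y in Ioc a (a + 1), ‖g y‖ ^ 2) := by
  haveI : Fact ((0:ℝ) < 1) := ⟨one_pos⟩
  set G₀ : AddCircle (1:ℝ) → ℂ := AddCircle.liftIoc 1 a g with hG₀
  have hG₀m : StronglyMeasurable G₀ := by
    have : G₀ = g ∘ (fun t : AddCircle (1:ℝ) => ((AddCircle.measurableEquivIoc 1 a) t : ℝ)) := by
      rfl
    rw [this]
    exact hg.comp_measurable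
      (measurable_subtype_coe.comp (AddCircle.measurableEquivIoc 1 a).measurable)
  have hhaar : (AddCircle.haarAddCircle : Measure (AddCircle (1:ℝ))) = volume := by
    rw [AddCircle.volume_eq_smul_haarAddCircle]
    simp
  have hmp : MeasurePreserving ((↑) : ℝ → AddCircle (1:ℝ))
      (volume.restrict (Ioc a (a + 1))) AddCircle.haarAddCircle := by
    rw [hhaar]
    exact AddCircle.measurePreserving_mk 1 a
  have hcoe : ∀ᵐ y ∂(volume.restrict (Ioc a (a + 1))), G₀ ((y : ℝ) : AddCircle (1:ℝ)) = g y := by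
    filter_upwards [ae_restrict_mem measurableSet_Ioc] with y hy
    exact AddCircle.liftIoc_coe_apply hy
  have hkey : eLpNorm G₀ 2 (AddCircle.haarAddCircle) =
      eLpNorm (fun y : ℝ => G₀ ((y : ℝ) : AddCircle (1:ℝ))) 2 (volume.restrict (Ioc a (a + 1))) := by
    rw [← hmp.map_eq]
    exact eLpNorm_map_measure hG₀m.aestronglyMeasurable hmp.measurable.aemeasurable
  have hmemG : MemLp G₀ 2 (AddCircle.haarAddCircle) := by
    refine ⟨hG₀m.aestronglyMeasurable, ?_⟩
    rw [hkey, eLpNorm_congr_ae hcoe]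
    exact hmem.2
  set G : Lp ℂ 2 (@AddCircle.haarAddCircle 1 _) := hmemG.toLp G₀ with hGdef
  have hGae : ⇑G =ᵐ[AddCircle.haarAddCircle] G₀ := hmemG.coeFn_toLp
  have hco : ∀ n : ℤ, fourierCoeff (⇑G) n = fourierCoeffOn (by linarith : a < a + 1) g n := by
    intro n
    have h1 : fourierCoeff (⇑G) n = fourierCoeff G₀ n := by
      unfold fourierCoeff
      exact integral_congr_ae (hGae.mono fun t ht => by dsimp only; rw [ht])
    rw [h1, hG₀]
    exact fourierCoeff_liftIoc_eq g n
  have hval : ∀ n : ℤ, fourierCoeffOn (by linarith : a < a + 1) g n =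
      ∫ y in Ioc a (a + 1), Complex.exp (2 * π * Complex.I * (-n) * y) * g y := by
    intro n
    rw [fourierCoeffOn_eq_integral, intervalIntegral.integral_of_le (by linarith : a ≤ a + 1)]
    have h2 : ∀ y : ℝ, (fourier (-n) (y : AddCircle (a + 1 - a))) • g y =
        Complex.exp (2 * π * Complex.I * (-n) * y) * g y := by
      intro y
      rw [fourier_coe_apply]
      norm_num
    simp only [h2]
    norm_num
  have hrhs : (∫ t : AddCircle (1:ℝ), ‖G t‖ ^ 2 ∂AddCircle.haarAddCircle) =
      ∫ y in Ioc a (a + 1), ‖g y‖ ^ 2 := by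
    have h1 : (∫ t : AddCircle (1:ℝ), ‖G t‖ ^ 2 ∂AddCircle.haarAddCircle) =
        ∫ t : AddCircle (1:ℝ), ‖G₀ t‖ ^ 2 ∂AddCircle.haarAddCircle :=
      integral_congr_ae (hGae.mono fun t ht => by dsimp only; rw [ht])
    have h2 : (∫ t : AddCircle (1:ℝ), ‖G₀ t‖ ^ 2 ∂AddCircle.haarAddCircle) =
        ∫ y in Ioc a (a + 1), ‖G₀ ((y:ℝ) : AddCircle (1:ℝ))‖ ^ 2 := by
      rw [← hmp.map_eq, integral_map hmp.measurable.aemeasurable]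
      exact (hG₀m.norm.pow 2).aestronglyMeasurable
    rw [h1, h2]
    exact integral_congr_ae (hcoe.mono fun y hy => by dsimp only; rw [hy])
  have hsummable : Summable fun n : ℤ => ‖fourierCoeff (⇑G) n‖ ^ 2 := by
    have h0 : ∀ n : ℤ, fourierCoeff (⇑G) n = fourierBasis.repr G n := by
      intro n; rw [fourierBasis_repr]
    simp only [h0]
    have := (lp.memℓp (fourierBasis.repr G)).summable (by norm_num : 0 < (2 : ℝ≥0∞).toReal)
    simpa using this
  have hts := tsum_sq_fourierCoeff G
  have hfinal : ∀ n : ℤ, ‖fourierCoeff (⇑G) n‖ ^ 2 =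
      ‖∫ y in Ioc a (a + 1), Complex.exp (2 * π * Complex.I * (-n) * y) * g y‖ ^ 2 := by
    intro n; rw [hco n, hval n]
  rw [hrhs] at hts
  simp only [hfinal] at hts hsummable
  have h := hsummable.hasSum
  rwa [hts] at h

end Aux

set_option maxHeartbeats 2000000 in
theorem cylindric_sampling_bound
    (m : ℕ) (S : Set (EuclideanSpace ℝ (Fin m) × ℝ)) (B : Set (EuclideanSpace ℝ (Fin m)))
    (hcyl : IsCylindric S B) (hB : 0 < volume B)
    (Γ : Set (EuclideanSpace ℝ (Fin m))) (hΓ : Γ.Countable)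
    (hbasis : IsRieszBasis (fun γ : Γ => expLp B (γ : EuclideanSpace ℝ (Fin m)))) :
    ∃ M : ℝ, ∀ f : Lp ℂ 2 (volume.restrict S),
      ‖f‖ ^ 2 ≤ M * ∑' q : Γ × ℤ,
        ‖(inner ℂ f (expLpProd S (q.1 : EuclideanSpace ℝ (Fin m)) q.2) : ℂ)‖ ^ 2 := by
  classical
  obtain ⟨hSb, hSm, hBb, hBm, φ, hφm, -, hSeq⟩ := hcyl
  haveI hfS : Fact (volume S < ∞) := ⟨hSb.measure_lt_top⟩
  haveI hfB : Fact (volume B < ∞) := ⟨hBb.measure_lt_top⟩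
  haveI : Countable Γ := hΓ.to_subtype
  obtain ⟨M, Mu, hM0, hMu0, hR⟩ := cyl_riesz_lower hbasis
  refine ⟨M, fun f => ?_⟩
  set F : EuclideanSpace ℝ (Fin m) × ℝ → ℂ := ⇑f with hFdef
  have hFm : StronglyMeasurable F := Lp.stronglyMeasurable f
  -- membership description of S
  have hmemS : ∀ x y, ((x, y) ∈ S) ↔ (x ∈ B ∧ y ∈ Icc (φ x) (φ x + 1)) := by
    intro x y; rw [hSeq]; simp [Set.mem_Icc]
  have hind : ∀ {α : Type} [Zero α] (h : EuclideanSpace ℝ (Fin m) × ℝ → α) x y,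
      S.indicator h (x, y) =
        if x ∈ B then (Icc (φ x) (φ x + 1)).indicator (fun y => h (x, y)) y else 0 := by
    intro α _ h x y
    by_cases hx : x ∈ B <;> by_cases hy : y ∈ Icc (φ x) (φ x + 1) <;>
      simp [Set.indicator_apply, hmemS x y, hx, hy]
  -- the fiberwise squared-norm kernel
  set NS : EuclideanSpace ℝ (Fin m) × ℝ → ℝ≥0∞ :=
    S.indicator (fun p => (‖F p‖₊ : ℝ≥0∞) ^ 2) with hNSdef
  have hNSm : Measurable NS :=
    ((hFm.measurable.nnnorm.coe_nnreal_ennreal).pow_const 2).indicator hSm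
  set K : EuclideanSpace ℝ (Fin m) → ℝ≥0∞ := fun x => ∫⁻ y, NS (x, y) with hKdef
  have hKm : Measurable K := hNSm.lintegral_prod_right'
  have hKB : ∀ x ∈ B, K x = ∫⁻ y in Ioc (φ x) (φ x + 1), (‖F (x, y)‖₊ : ℝ≥0∞) ^ 2 := by
    intro x hx
    have h1 : (fun y => NS (x, y)) =
        (Icc (φ x) (φ x + 1)).indicator (fun y => (‖F (x, y)‖₊ : ℝ≥0∞) ^ 2) := by
      funext y
      rw [hNSdef, hind _ x y, if_pos hx]
    calc K x = ∫⁻ y, (Icc (φ x) (φ x + 1)).indicator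
          (fun y => (‖F (x, y)‖₊ : ℝ≥0∞) ^ 2) y := by rw [hKdef]; exact lintegral_congr fun y => by rw [← h1]
      _ = ∫⁻ y in Icc (φ x) (φ x + 1), (‖F (x, y)‖₊ : ℝ≥0∞) ^ 2 :=
          lintegral_indicator measurableSet_Icc _
      _ = ∫⁻ y in Ioc (φ x) (φ x + 1), (‖F (x, y)‖₊ : ℝ≥0∞) ^ 2 := by
          rw [restrict_Ioc_eq_restrict_Icc]
  have hK0 : ∀ x, x ∉ B → K x = 0 := by
    intro x hx
    rw [hKdef]
    have : ∀ y : ℝ, NS (x, y) = 0 := fun y => by rw [hNSdef, hind _ x y, if_neg hx]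
    simp [this]
  have htot : ENNReal.ofReal (‖f‖ ^ 2) = ∫⁻ x in B, K x ∂volume := by
    rw [cyl_lp_norm_sq_as_lintegral f, ← lintegral_indicator hSm, ← hNSdef,
      Measure.volume_eq_prod, lintegral_prod _ hNSm.aemeasurable,
      ← lintegral_indicator hBm]
    refine lintegral_congr fun x => ?_
    by_cases hx : x ∈ B
    · rw [Set.indicator_of_mem hx]
    · rw [Set.indicator_of_notMem hx]
      exact hK0 x hx
  have hfin : (∫⁻ x in B, K x ∂volume) ≠ ∞ := by
    rw [← htot]; exact ENNReal.ofReal_ne_top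
  -- the Fourier coefficients in the vertical direction
  set g : ℤ → EuclideanSpace ℝ (Fin m) → ℂ := fun n x => ∫ y : ℝ,
    S.indicator (fun p => Complex.exp (2 * ↑π * Complex.I * -(n : ℂ) * (p.2 : ℂ)) * F p) (x, y)
    with hgdef
  have hexpm : ∀ n : ℤ, StronglyMeasurable fun p : EuclideanSpace ℝ (Fin m) × ℝ =>
      Complex.exp (2 * ↑π * Complex.I * -(n : ℂ) * (p.2 : ℂ)) := fun n =>
    (Complex.continuous_exp.comp (continuous_const.mul
      (Complex.continuous_ofReal.comp continuous_snd))).stronglyMeasurable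
  have hSindm : ∀ n : ℤ, StronglyMeasurable
      (S.indicator (fun p => Complex.exp (2 * ↑π * Complex.I * -(n : ℂ) * (p.2 : ℂ)) * F p)) :=
    fun n => ((hexpm n).mul hFm).indicator hSm
  have hgm : ∀ n : ℤ, StronglyMeasurable (g n) := by
    intro n
    rw [hgdef]
    exact (hSindm n).integral_prod_right'
  have hgval : ∀ (n : ℤ) (x), x ∈ B → g n x =
      ∫ y in Ioc (φ x) (φ x + 1),
        Complex.exp (2 * ↑π * Complex.I * -(n : ℂ) * (y : ℂ)) * F (x, y) := by
    intro n x hx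
    have h1 : ∀ y : ℝ, S.indicator
        (fun p => Complex.exp (2 * ↑π * Complex.I * -(n : ℂ) * (p.2 : ℂ)) * F p) (x, y) =
        (Icc (φ x) (φ x + 1)).indicator
          (fun y => Complex.exp (2 * ↑π * Complex.I * -(n : ℂ) * (y : ℂ)) * F (x, y)) y := by
      intro y
      rw [hind _ x y, if_pos hx]
    calc g n x = ∫ y : ℝ, (Icc (φ x) (φ x + 1)).indicator
          (fun y => Complex.exp (2 * ↑π * Complex.I * -(n : ℂ) * (y : ℂ)) * F (x, y)) y := by
            rw [hgdef]; exact integral_congr_ae (Filter.Eventually.of_forall h1)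
      _ = ∫ y in Icc (φ x) (φ x + 1),
            Complex.exp (2 * ↑π * Complex.I * -(n : ℂ) * (y : ℂ)) * F (x, y) :=
          integral_indicator measurableSet_Icc
      _ = ∫ y in Ioc (φ x) (φ x + 1),
            Complex.exp (2 * ↑π * Complex.I * -(n : ℂ) * (y : ℂ)) * F (x, y) := by
          rw [restrict_Ioc_eq_restrict_Icc]
  -- a.e. fiberwise Parseval
  have hParse : ∀ᵐ x ∂(volume.restrict B),
      (∑' n : ℤ, ((‖g n x‖₊ : ℝ≥0∞)) ^ 2 = K x) ∧
      (∀ n : ℤ, ((‖g n x‖₊ : ℝ≥0∞)) ^ 2 ≤ K x) := by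
    filter_upwards [ae_lt_top hKm hfin, ae_restrict_mem hBm] with x hKlt hx
    have hsecm : StronglyMeasurable fun y => F (x, y) :=
      hFm.comp_measurable measurable_prodMk_left
    have hmemfib : MemLp (fun y => F (x, y)) 2 (volume.restrict (Ioc (φ x) (φ x + 1))) := by
      refine cyl_memℒp_two_of_lintegral hsecm.aestronglyMeasurable ?_
      rw [← hKB x hx]
      exact hKlt.ne
    have hps := cyl_fiber_parseval (φ x) (fun y => F (x, y)) hsecm hmemfib
    have heq : (fun n : ℤ => ‖g n x‖ ^ 2) = fun n : ℤ =>
        ‖∫ y in Ioc (φ x) (φ x + 1),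
          Complex.exp (2 * ↑π * Complex.I * (-(n : ℂ)) * (y : ℂ)) * F (x, y)‖ ^ 2 :=
      funext fun n => by rw [hgval n x hx]
    rw [← heq] at hps
    have hofr : ∀ z : ℂ, ((‖z‖₊ : ℝ≥0∞)) ^ 2 = ENNReal.ofReal (‖z‖ ^ 2) := fun z => by
      rw [ENNReal.ofReal_pow (norm_nonneg _), ofReal_norm, enorm_eq_nnnorm]
    have htsumE : ∑' n : ℤ, ((‖g n x‖₊ : ℝ≥0∞)) ^ 2 = K x := by
      simp only [hofr]
      rw [← ENNReal.ofReal_tsum_of_nonneg (fun n => sq_nonneg _) hps.summable,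
        hps.tsum_eq, cyl_ofReal_integral_norm_sq hmemfib, hKB x hx]
    refine ⟨htsumE, fun n => ?_⟩
    rw [← htsumE]
    exact ENNReal.le_tsum n
  -- each g n is L² on B
  have hgBfin : ∀ n : ℤ, (∫⁻ x in B, (‖g n x‖₊ : ℝ≥0∞) ^ 2 ∂volume) ≠ ∞ := by
    intro n
    have hle : (∫⁻ x in B, (‖g n x‖₊ : ℝ≥0∞) ^ 2 ∂volume) ≤ ∫⁻ x in B, K x ∂volume :=
      lintegral_mono_ae (hParse.mono fun x hx => hx.2 n)
    exact (lt_of_le_of_lt hle hfin.lt_top).ne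
  have hmemg : ∀ n : ℤ, MemLp (g n) 2 (volume.restrict B) := fun n =>
    cyl_memℒp_two_of_lintegral (hgm n).aestronglyMeasurable (hgBfin n)
  set G : ℤ → Lp ℂ 2 (volume.restrict B) := fun n => (hmemg n).toLp (g n) with hGdef
  have hGnorm : ∀ n : ℤ, ENNReal.ofReal (‖G n‖ ^ 2) =
      ∫⁻ x in B, (‖g n x‖₊ : ℝ≥0∞) ^ 2 ∂volume := by
    intro n
    rw [cyl_lp_norm_sq_as_lintegral (G n)]
    exact lintegral_congr_ae (((hmemg n).coeFn_toLp).mono fun x hx => by dsimp only; rw [hx])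
  have hchain : ENNReal.ofReal (‖f‖ ^ 2) = ∑' n : ℤ, ENNReal.ofReal (‖G n‖ ^ 2) := by
    rw [htot]
    have h1 : (∫⁻ x in B, K x ∂volume) =
        ∫⁻ x in B, ∑' n : ℤ, (‖g n x‖₊ : ℝ≥0∞) ^ 2 ∂volume :=
      lintegral_congr_ae (hParse.mono fun x hx => hx.1.symm)
    rw [h1, lintegral_tsum fun n =>
      ((hgm n).measurable.nnnorm.coe_nnreal_ennreal.pow_const 2).aemeasurable]
    exact tsum_congr fun n => (hGnorm n).symm
  -- the key inner-product identity
  have hmemEB : ∀ l : EuclideanSpace ℝ (Fin m), MemLp (expFun l) 2 (volume.restrict B) := by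
    intro l
    have hc : Continuous (expFun l) := by
      unfold expFun
      exact Complex.continuous_exp.comp (continuous_const.mul
        (Complex.continuous_ofReal.comp (Continuous.inner continuous_const continuous_id)))
    refine MemLp.of_bound hc.aestronglyMeasurable 1
      (Filter.Eventually.of_forall fun x => ?_)
    simp only [expFun]
    exact le_of_eq (cyl_norm_exp _)
  have hip : ∀ (n : ℤ) (γ : Γ), (inner ℂ f (expLpProd S (↑γ : EuclideanSpace ℝ (Fin m)) n) : ℂ) =
      (inner ℂ (G n) (expLp B (↑γ : EuclideanSpace ℝ (Fin m))) : ℂ) := by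
    intro n γ
    set c : EuclideanSpace ℝ (Fin m) := (↑γ : EuclideanSpace ℝ (Fin m)) with hcdef
    set EnF : EuclideanSpace ℝ (Fin m) × ℝ → ℂ := fun p =>
      Complex.exp (2 * Real.pi * Complex.I * (((⟪ c, p.1 ⟫ : ℝ) + (n : ℝ) * p.2 : ℝ) : ℂ))
      with hEnFdef
    have hEnFc : Continuous EnF := by
      rw [hEnFdef]
      exact Complex.continuous_exp.comp (continuous_const.mul
        (Complex.continuous_ofReal.comp
          ((Continuous.inner continuous_const continuous_fst).add
            (continuous_const.mul continuous_snd))))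
    have hEn : MemLp EnF 2 (volume.restrict S) :=
      MemLp.of_bound hEnFc.aestronglyMeasurable 1
        (Filter.Eventually.of_forall fun p => le_of_eq (cyl_norm_exp _))
    have hProd : expLpProd S c n = hEn.toLp EnF := by
      simp only [expLpProd]
      rw [dif_pos hEn]
    have hLpB : expLp B c = (hmemEB c).toLp (expFun c) := by
      simp only [expLp]
      rw [dif_pos (hmemEB c)]
    have hLHS1 : (inner ℂ f (expLpProd S c n) : ℂ) =
        ∫ p, conj (F p) * EnF p ∂(volume.restrict S) := by
      rw [hProd, L2.inner_def]
      refine integral_congr_ae ?_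
      filter_upwards [hEn.coeFn_toLp] with p hp
      rw [RCLike.inner_apply, hp]
      exact mul_comm _ _
    have hFint : Integrable F (volume.restrict S) := (Lp.memLp f).integrable one_le_two
    have hconjFm : StronglyMeasurable fun p => conj (F p) :=
      RCLike.continuous_conj.comp_stronglyMeasurable hFm
    have hconjFint : Integrable (fun p => conj (F p)) (volume.restrict S) :=
      hFint.mono hconjFm.aestronglyMeasurable
        (Filter.Eventually.of_forall fun p => by simp)
    have hJint : Integrable (fun p => conj (F p) * EnF p) (volume.restrict S) := by
      have h1 : Integrable (fun p => EnF p * conj (F p)) (volume.restrict S) :=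
        hconjFint.bdd_mul hEnFc.aestronglyMeasurable
          (c := 1) (Filter.Eventually.of_forall fun p => le_of_eq (cyl_norm_exp _))
      simpa [mul_comm] using h1
    have hinnerint : ∀ x : EuclideanSpace ℝ (Fin m),
        (∫ y : ℝ, S.indicator (fun p => conj (F p) * EnF p) (x, y)) =
        B.indicator (fun x => expFun c x * conj (g n x)) x := by
      intro x
      by_cases hx : x ∈ B
      · rw [Set.indicator_of_mem hx]
        have h1 : ∀ y : ℝ, S.indicator (fun p => conj (F p) * EnF p) (x, y) =
            (Icc (φ x) (φ x + 1)).indicator (fun y => conj (F (x, y)) * EnF (x, y)) y :=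
          fun y => by rw [hind _ x y, if_pos hx]
        have hsplit : ∀ y : ℝ, conj (F (x, y)) * EnF (x, y) =
            expFun c x * (conj (F (x, y)) *
              Complex.exp (2 * ↑π * Complex.I * (n : ℂ) * (y : ℂ))) := by
          intro y
          have h2 : EnF (x, y) = expFun c x *
              Complex.exp (2 * ↑π * Complex.I * (n : ℂ) * (y : ℂ)) := by
            simp only [hEnFdef, expFun]
            rw [← Complex.exp_add]
            congr 1
            push_cast
            ring
          rw [h2]; ring
        calc (∫ y : ℝ, S.indicator (fun p => conj (F p) * EnF p) (x, y))
            = ∫ y : ℝ, (Icc (φ x) (φ x + 1)).indicator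
                (fun y => conj (F (x, y)) * EnF (x, y)) y :=
              integral_congr_ae (Filter.Eventually.of_forall h1)
          _ = ∫ y in Icc (φ x) (φ x + 1), conj (F (x, y)) * EnF (x, y) :=
              integral_indicator measurableSet_Icc
          _ = ∫ y in Ioc (φ x) (φ x + 1), conj (F (x, y)) * EnF (x, y) := by
              rw [restrict_Ioc_eq_restrict_Icc]
          _ = ∫ y in Ioc (φ x) (φ x + 1), expFun c x * (conj (F (x, y)) *
                Complex.exp (2 * ↑π * Complex.I * (n : ℂ) * (y : ℂ))) :=
              integral_congr_ae (Filter.Eventually.of_forall fun y => hsplit y)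
          _ = expFun c x * ∫ y in Ioc (φ x) (φ x + 1), conj (F (x, y)) *
                Complex.exp (2 * ↑π * Complex.I * (n : ℂ) * (y : ℂ)) :=
              integral_const_mul _ _
          _ = expFun c x * conj (g n x) := by
              congr 1
              rw [hgval n x hx, ← integral_conj]
              refine integral_congr_ae (Filter.Eventually.of_forall fun y => ?_)
              dsimp only
              rw [map_mul, ← Complex.exp_conj]
              have harg : (starRingEnd ℂ) (2 * ↑π * Complex.I * -(n : ℂ) * (y : ℂ)) =
                  2 * ↑π * Complex.I * (n : ℂ) * (y : ℂ) := by
                simp only [map_mul, map_neg, Complex.conj_I, Complex.conj_ofReal, map_ofNat,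
                  map_intCast]
                ring
              rw [harg]
              ring
      · rw [Set.indicator_of_notMem hx]
        have h1 : ∀ y : ℝ, S.indicator (fun p => conj (F p) * EnF p) (x, y) = 0 :=
          fun y => by rw [hind _ x y, if_neg hx]
        simp [h1]
    have hLHS : (inner ℂ f (expLpProd S c n) : ℂ) = ∫ x in B, conj (g n x) * expFun c x := by
      calc (inner ℂ f (expLpProd S c n) : ℂ)
          = ∫ p, conj (F p) * EnF p ∂(volume.restrict S) := hLHS1
        _ = ∫ p, S.indicator (fun p => conj (F p) * EnF p) p := (integral_indicator hSm).symm
        _ = ∫ x, ∫ y : ℝ, S.indicator (fun p => conj (F p) * EnF p) (x, y) := by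
            rw [Measure.volume_eq_prod, integral_prod]
            exact (integrable_indicator_iff hSm).2 hJint
        _ = ∫ x, B.indicator (fun x => expFun c x * conj (g n x)) x :=
            integral_congr_ae (Filter.Eventually.of_forall fun x => by
              dsimp only; rw [hinnerint x])
        _ = ∫ x in B, expFun c x * conj (g n x) := integral_indicator hBm
        _ = ∫ x in B, conj (g n x) * expFun c x :=
            integral_congr_ae (Filter.Eventually.of_forall fun x => mul_comm _ _)
    have hRHS : (inner ℂ (G n) (expLp B c) : ℂ) = ∫ x in B, conj (g n x) * expFun c x := by
      rw [hLpB, L2.inner_def]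
      refine integral_congr_ae ?_
      filter_upwards [(hmemg n).coeFn_toLp, (hmemEB c).coeFn_toLp] with x h1 h2
      rw [RCLike.inner_apply, h1, h2]
      exact mul_comm _ _
    rw [hLHS, hRHS]
  -- Riesz basis bounds applied to each `G n`
  have hsn : ∀ n : ℤ, ∃ s : ℝ,
      HasSum (fun γ : Γ => ‖(inner ℂ f (expLpProd S (↑γ : EuclideanSpace ℝ (Fin m)) n) : ℂ)‖ ^ 2) s ∧
      ‖G n‖ ^ 2 ≤ M * s ∧ s ≤ Mu * ‖G n‖ ^ 2 := by
    intro n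
    obtain ⟨s, hs1, hs2, hs3⟩ := hR (G n)
    refine ⟨s, ?_, hs2, hs3⟩
    have heq : (fun γ : Γ =>
        ‖(inner ℂ f (expLpProd S (↑γ : EuclideanSpace ℝ (Fin m)) n) : ℂ)‖ ^ 2) =
        fun γ : Γ => ‖(inner ℂ (G n) (expLp B (↑γ : EuclideanSpace ℝ (Fin m))) : ℂ)‖ ^ 2 :=
      funext fun γ => by rw [hip n γ]
    rw [heq]
    exact hs1
  choose s hsSum hsLow hsUp using hsn
  set Q : Γ × ℤ → ℝ≥0∞ := fun q =>
    ENNReal.ofReal (‖(inner ℂ f (expLpProd S (↑q.1 : EuclideanSpace ℝ (Fin m)) q.2) : ℂ)‖ ^ 2)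
    with hQdef
  have hQrow : ∀ n : ℤ, ∑' γ : Γ, Q (γ, n) = ENNReal.ofReal (s n) := by
    intro n
    rw [← (hsSum n).tsum_eq,
      ENNReal.ofReal_tsum_of_nonneg (fun γ => sq_nonneg _) (hsSum n).summable]
  have hQtot : ∑' q : Γ × ℤ, Q q = ∑' n : ℤ, ENNReal.ofReal (s n) := by
    rw [ENNReal.tsum_prod', ENNReal.tsum_comm]
    exact tsum_congr hQrow
  have hQfin : (∑' q : Γ × ℤ, Q q) ≠ ∞ := by
    rw [hQtot]
    have hle : (∑' n : ℤ, ENNReal.ofReal (s n)) ≤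
        ENNReal.ofReal Mu * ENNReal.ofReal (‖f‖ ^ 2) := by
      calc (∑' n : ℤ, ENNReal.ofReal (s n))
          ≤ ∑' n : ℤ, ENNReal.ofReal Mu * ENNReal.ofReal (‖G n‖ ^ 2) := by
            refine ENNReal.tsum_le_tsum fun n => ?_
            rw [← ENNReal.ofReal_mul hMu0]
            exact ENNReal.ofReal_le_ofReal (hsUp n)
        _ = ENNReal.ofReal Mu * ∑' n : ℤ, ENNReal.ofReal (‖G n‖ ^ 2) := ENNReal.tsum_mul_left
        _ = ENNReal.ofReal Mu * ENNReal.ofReal (‖f‖ ^ 2) := by rw [← hchain]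
    exact ne_top_of_le_ne_top
      (ENNReal.mul_ne_top ENNReal.ofReal_ne_top ENNReal.ofReal_ne_top) hle
  have hmain : ENNReal.ofReal (‖f‖ ^ 2) ≤ ENNReal.ofReal M * ∑' q : Γ × ℤ, Q q := by
    rw [hchain, hQtot]
    calc (∑' n : ℤ, ENNReal.ofReal (‖G n‖ ^ 2))
        ≤ ∑' n : ℤ, ENNReal.ofReal M * ENNReal.ofReal (s n) := by
          refine ENNReal.tsum_le_tsum fun n => ?_
          rw [← ENNReal.ofReal_mul hM0]
          exact ENNReal.ofReal_le_ofReal (hsLow n)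
      _ = ENNReal.ofReal M * ∑' n : ℤ, ENNReal.ofReal (s n) := ENNReal.tsum_mul_left
  have h2 : (∑' q : Γ × ℤ, Q q).toReal =
      ∑' q : Γ × ℤ, ‖(inner ℂ f (expLpProd S (↑q.1 : EuclideanSpace ℝ (Fin m)) q.2) : ℂ)‖ ^ 2 := by
    rw [ENNReal.tsum_toReal_eq fun q => ENNReal.ofReal_ne_top]
    exact tsum_congr fun q => ENNReal.toReal_ofReal (sq_nonneg _)
  calc ‖f‖ ^ 2 = (ENNReal.ofReal (‖f‖ ^ 2)).toReal := (ENNReal.toReal_ofReal (sq_nonneg _)).symm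
    _ ≤ (ENNReal.ofReal M * ∑' q : Γ × ℤ, Q q).toReal :=
        ENNReal.toReal_mono (ENNReal.mul_ne_top ENNReal.ofReal_ne_top hQfin) hmain
    _ = M * ∑' q : Γ × ℤ,
          ‖(inner ℂ f (expLpProd S (↑q.1 : EuclideanSpace ℝ (Fin m)) q.2) : ℂ)‖ ^ 2 := by
        rw [ENNReal.toReal_mul, ENNReal.toReal_ofReal hM0, h2]
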